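/- For every natural number n ≥ 2 and every real x, the derivative of the n-th iterate of cosine vanishes at x if and only if x is an integer multiple of π/2: d/dx (cos^[n])(x) = 0 ↔ ∃ k : ℤ, x = k · π/2. -/

import Mathlib

open Real

private lemma diff_iter_cos (n : ℕ) : Differentiable ℝ (Real.cos^[n]) :=
  Real.differentiable_cos.iterate n

private lemma mem_S_cos {y : ℝ} (hy : y ∈ Set.Icc (Real.cos 1) 1) :
    Real.cos y ∈ Set.Icc (Real.cos 1) 1 := by
  obtain ⟨h1, h2⟩ := hy
  have h0 : (0:ℝ) ≤ y := le_trans Real.cos_one_pos.le h1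
  refine ⟨Real.cos_le_cos_of_nonneg_of_le_pi h0 ?_ h2, Real.cos_le_one y⟩
  linarith [Real.pi_gt_three]

private lemma deriv_iter_ne_zero (m : ℕ) : ∀ y ∈ Set.Icc (Real.cos 1) 1,
    deriv (Real.cos^[m]) y ≠ 0 := by
  induction m with
  | zero => intro y _; simp
  | succ m ih =>
    intro y hy
    rw [Function.iterate_succ]
    rw [deriv_comp _ ((diff_iter_cos m) _) (Real.differentiable_cos _)]
    have hsin : Real.sin y ≠ 0 := by
      have h0 : 0 < y := lt_of_lt_of_le Real.cos_one_pos hy.1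
      have := Real.sin_pos_of_pos_of_lt_pi h0 (by linarith [Real.pi_gt_three, hy.2])
      linarith
    have := ih _ (mem_S_cos hy)
    simp [Real.deriv_cos, hsin, this]

theorem deriv_iterate_cos_eq_zero_iff (n : ℕ) (hn : 2 ≤ n) (x : ℝ) :
    deriv (Real.cos^[n]) x = 0 ↔ ∃ k : ℤ, x = k * (π / 2) := by
  obtain ⟨m, rfl⟩ : ∃ m, n = m + 2 := ⟨n - 2, by omega⟩
  have h1 : deriv (Real.cos^[m + 2]) x =
      deriv (Real.cos^[m]) (Real.cos (Real.cos x)) * -Real.sin (Real.cos x) * -Real.sin x := by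
    rw [show m + 2 = m + 1 + 1 from rfl, Function.iterate_succ,
      deriv_comp _ ((diff_iter_cos (m+1)) _) (Real.differentiable_cos _),
      Function.iterate_succ,
      deriv_comp _ ((diff_iter_cos m) _) (Real.differentiable_cos _)]
    simp [Real.deriv_cos]
  have hmem : Real.cos (Real.cos x) ∈ Set.Icc (Real.cos 1) 1 := by
    have : Real.cos (Real.cos x) = Real.cos |Real.cos x| := (Real.cos_abs _).symm
    rw [this]
    refine ⟨Real.cos_le_cos_of_nonneg_of_le_pi (abs_nonneg _) ?_ ?_, Real.cos_le_one _⟩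
    · linarith [Real.pi_gt_three]
    · rw [abs_le]; exact ⟨Real.neg_one_le_cos x, Real.cos_le_one x⟩
  have hA := deriv_iter_ne_zero m _ hmem
  have hsc : Real.sin (Real.cos x) = 0 ↔ Real.cos x = 0 := by
    refine Real.sin_eq_zero_iff_of_lt_of_lt ?_ ?_
    · linarith [Real.pi_gt_three, Real.neg_one_le_cos x]
    · linarith [Real.pi_gt_three, Real.cos_le_one x]
  rw [h1]
  constructor
  · intro h
    rcases mul_eq_zero.1 h with h | h
    · rcases mul_eq_zero.1 h with h | h
      · exact absurd h hA
      · have hc : Real.cos x = 0 := hsc.1 (by linarith [neg_eq_zero.1 h])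
        obtain ⟨k, hk⟩ := Real.cos_eq_zero_iff.1 hc
        exact ⟨2 * k + 1, by rw [hk]; push_cast; ring⟩
    · have hs : Real.sin x = 0 := by linarith [neg_eq_zero.1 h]
      obtain ⟨k, hk⟩ := Real.sin_eq_zero_iff.1 hs
      exact ⟨2 * k, by rw [← hk]; push_cast; ring⟩
  · rintro ⟨k, rfl⟩
    rcases Int.even_or_odd k with ⟨j, hj⟩ | ⟨j, hj⟩
    · have hs : Real.sin ((k : ℝ) * (π / 2)) = 0 := by
        have : (k : ℝ) * (π / 2) = (j : ℝ) * π := by rw [hj]; push_cast; ring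
        rw [this]; exact Real.sin_int_mul_pi j
      rw [hs]; ring
    · have hc : Real.cos ((k : ℝ) * (π / 2)) = 0 := by
        refine Real.cos_eq_zero_iff.2 ⟨j, ?_⟩
        rw [hj]; push_cast; ring
      rw [hc]
      simp
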